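/- (Grothendieck type theorem) Let m ≥ 1 be a positive integer. Every continuous m-homogeneous polynomial P : ℓ_1 → ℓ_2 is factorable strongly 1-summing. -/

import Mathlib

open scoped BigOperators
open MeasureTheory

noncomputable section

section Defs

variable (𝕜 : Type*) [RCLike 𝕜]

section Multi

variable {n : ℕ} {X : Fin n → Type*} {Y : Type*}
  [∀ k, NormedAddCommGroup (X k)] [∀ k, NormedSpace 𝕜 (X k)]
  [NormedAddCommGroup Y] [NormedSpace 𝕜 Y]

/-- `C` witnesses the defining inequality of factorable strongly `p`-summing
multilinear operators. -/
def FactStronglySummingBound (p : ℝ) (T : ContinuousMultilinearMap 𝕜 X Y) (C : ℝ) : Prop :=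
  0 ≤ C ∧ ∀ (m₁ m₂ : ℕ) (x : Fin m₁ → Fin m₂ → (∀ k, X k)) (lam : Fin m₁ → Fin m₂ → 𝕜),
    (∑ j, ‖∑ i, lam j i • T (x j i)‖ ^ p) ^ (1 / p) ≤
      C * ⨆ φ : {φ : ContinuousMultilinearMap 𝕜 X 𝕜 // ‖φ‖ ≤ 1},
        (∑ j, ‖∑ i, lam j i • φ.1 (x j i)‖ ^ p) ^ (1 / p)

/-- Factorable strongly `p`-summing continuous multilinear operators. -/
def FactStronglySumming (p : ℝ) (T : ContinuousMultilinearMap 𝕜 X Y) : Prop :=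
  ∃ C, FactStronglySummingBound 𝕜 p T C

/-- The factorable strongly `p`-summing norm `‖T‖_{FSt,p}` (the least admissible constant). -/
def fstMultiNorm (p : ℝ) (T : ContinuousMultilinearMap 𝕜 X Y) : ℝ :=
  sInf {C | FactStronglySummingBound 𝕜 p T C}

/-- Strongly `p`-summing continuous multilinear operators (Dimant). -/
def StronglySumming (p : ℝ) (T : ContinuousMultilinearMap 𝕜 X Y) : Prop :=
  ∃ C : ℝ, 0 ≤ C ∧ ∀ (m : ℕ) (x : Fin m → (∀ k, X k)),
    (∑ j, ‖T (x j)‖ ^ p) ^ (1 / p) ≤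
      C * ⨆ φ : {φ : ContinuousMultilinearMap 𝕜 X 𝕜 // ‖φ‖ ≤ 1},
        (∑ j, ‖φ.1 (x j)‖ ^ p) ^ (1 / p)

/-- Factorable `p`-dominated continuous multilinear operators. -/
def FactorablePDominated (p : ℝ) (T : ContinuousMultilinearMap 𝕜 X Y) : Prop :=
  ∃ C : ℝ, 0 ≤ C ∧ ∀ (m₁ m₂ : ℕ) (x : Fin m₁ → Fin m₂ → (∀ k, X k))
    (lam : Fin m₁ → Fin m₂ → 𝕜),
    (∑ j, ‖∑ i, lam j i • T (x j i)‖ ^ p) ^ (1 / p) ≤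
      C * ⨆ φ : ∀ k, {f : X k →L[𝕜] 𝕜 // ‖f‖ ≤ 1},
        (∑ j, ‖∑ i, lam j i • ∏ k, (φ k).1 (x j i k)‖ ^ p) ^ (1 / p)

/-- `p`-semi-integral continuous multilinear operators. -/
def PSemiIntegral (p : ℝ) (T : ContinuousMultilinearMap 𝕜 X Y) : Prop :=
  ∃ C : ℝ, 0 ≤ C ∧ ∀ (m : ℕ) (x : Fin m → (∀ k, X k)),
    (∑ j, ‖T (x j)‖ ^ p) ^ (1 / p) ≤
      C * ⨆ φ : ∀ k, {f : X k →L[𝕜] 𝕜 // ‖f‖ ≤ 1},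
        (∑ j, ‖∏ k, (φ k).1 (x j k)‖ ^ p) ^ (1 / p)

end Multi

section Poly

variable {X Y : Type*} [NormedAddCommGroup X] [NormedSpace 𝕜 X]
  [NormedAddCommGroup Y] [NormedSpace 𝕜 Y]

/-- `P` is a continuous `m`-homogeneous polynomial: the diagonal of a continuous
`m`-linear map. -/
def IsHomogPoly (m : ℕ) (P : X → Y) : Prop :=
  ∃ T : ContinuousMultilinearMap 𝕜 (fun _ : Fin m => X) Y, ∀ x, P x = T (fun _ => x)

/-- Sup norm of a (homogeneous polynomial) map on the closed unit ball. -/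
def polyNorm (P : X → Y) : ℝ :=
  ⨆ x : {x : X // ‖x‖ ≤ 1}, ‖P x.1‖

/-- `C` witnesses the defining inequality of factorable strongly `p`-summing
`m`-homogeneous polynomials. -/
def FactStronglySummingPolyBound (m : ℕ) (p : ℝ) (P : X → Y) (C : ℝ) : Prop :=
  0 ≤ C ∧ ∀ (m₁ m₂ : ℕ) (x : Fin m₁ → Fin m₂ → X) (lam : Fin m₁ → Fin m₂ → 𝕜),
    (∑ j, ‖∑ i, lam j i • P (x j i)‖ ^ p) ^ (1 / p) ≤
      C * ⨆ q : {q : X → 𝕜 // IsHomogPoly 𝕜 m q ∧ polyNorm q ≤ 1},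
        (∑ j, ‖∑ i, lam j i • q.1 (x j i)‖ ^ p) ^ (1 / p)

/-- Factorable strongly `p`-summing `m`-homogeneous polynomials. -/
def FactStronglySummingPoly (m : ℕ) (p : ℝ) (P : X → Y) : Prop :=
  IsHomogPoly 𝕜 m P ∧ ∃ C, FactStronglySummingPolyBound 𝕜 m p P C

/-- The factorable strongly `p`-summing norm `‖P‖_{FSt,p}` of a polynomial. -/
def fstPolyNorm (m : ℕ) (p : ℝ) (P : X → Y) : ℝ :=
  sInf {C | FactStronglySummingPolyBound 𝕜 m p P C}

/-- `C` witnesses the defining inequality of absolutely `p`-summing linear operators. -/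
def AbsSummingBound (p : ℝ) (u : X →L[𝕜] Y) (C : ℝ) : Prop :=
  0 ≤ C ∧ ∀ (m : ℕ) (x : Fin m → X),
    (∑ j, ‖u (x j)‖ ^ p) ^ (1 / p) ≤
      C * ⨆ φ : {φ : X →L[𝕜] 𝕜 // ‖φ‖ ≤ 1}, (∑ j, ‖φ.1 (x j)‖ ^ p) ^ (1 / p)

/-- Absolutely `p`-summing continuous linear operators. -/
def AbsolutelySumming (p : ℝ) (u : X →L[𝕜] Y) : Prop :=
  ∃ C, AbsSummingBound 𝕜 p u C

/-- The absolutely `p`-summing norm `π_p(u)` (the least admissible constant). -/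
def piSummingNorm (p : ℝ) (u : X →L[𝕜] Y) : ℝ :=
  sInf {C | AbsSummingBound 𝕜 p u C}

end Poly

end Defs

end

-- ===================== auxiliary development =====================


namespace GTaux
open Finset

def rad (b : Bool) : ℝ := if b then 1 else -1

lemma abs_rad (b : Bool) : |rad b| = 1 := by cases b <;> norm_num [rad]

def walsh {D : ℕ} (x : Fin D → ℝ) (ω : Fin D → Bool) : ℝ := ∑ d, x d * rad (ω d)

lemma sum_split {D : ℕ} (f : (Fin (D+1) → Bool) → ℝ) :
    ∑ ω : Fin (D+1) → Bool, f ω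
      = ∑ ω : Fin D → Bool, (f (Fin.cons true ω) + f (Fin.cons false ω)) := by
  rw [← (Fin.consEquiv (fun _ : Fin (D+1) => Bool)).sum_comp f]
  rw [Fintype.sum_prod_type]
  rw [Fintype.sum_bool]
  rw [← Finset.sum_add_distrib]
  rfl

lemma walsh_cons {D : ℕ} (b : Bool) (x : Fin (D+1) → ℝ) (ω : Fin D → Bool) :
    walsh x (Fin.cons b ω) = x 0 * rad b + walsh (fun d => x d.succ) ω := by
  simp [walsh, Fin.sum_univ_succ]

lemma card_bool_fun {D : ℕ} : (Finset.univ : Finset (Fin D → Bool)).card = 2^D := by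
  simp [Finset.card_univ]

lemma walsh_orth {D : ℕ} (x y : Fin D → ℝ) :
    ∑ ω : Fin D → Bool, walsh x ω * walsh y ω = 2^D * ∑ d, x d * y d := by
  induction D with
  | zero =>
    simp [walsh]
  | succ D ih =>
    rw [sum_split]
    have h : ∀ ω : Fin D → Bool,
        (walsh x (Fin.cons true ω) * walsh y (Fin.cons true ω) +
          walsh x (Fin.cons false ω) * walsh y (Fin.cons false ω))
        = 2 * (walsh (fun d => x d.succ) ω * walsh (fun d => y d.succ) ω) + 2 * (x 0 * y 0) := by
      intro ω
      simp only [walsh_cons, rad]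
      norm_num
      ring
    rw [Finset.sum_congr rfl (fun ω _ => h ω), Finset.sum_add_distrib, ← Finset.mul_sum, ih,
      Finset.sum_const, card_bool_fun, nsmul_eq_mul, Fin.sum_univ_succ]
    push_cast
    ring

lemma walsh_sq {D : ℕ} (x : Fin D → ℝ) :
    ∑ ω : Fin D → Bool, (walsh x ω)^2 = 2^D * ∑ d, (x d)^2 := by
  have := walsh_orth x x
  simpa [pow_two] using this

lemma walsh_pow4 {D : ℕ} (x : Fin D → ℝ) :
    ∑ ω : Fin D → Bool, (walsh x ω)^4 ≤ 2^D * (3 * (∑ d, (x d)^2)^2) := by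
  induction D with
  | zero =>
    simp [walsh]
  | succ D ih =>
    rw [sum_split]
    have h : ∀ ω : Fin D → Bool,
        ((walsh x (Fin.cons true ω))^4 + (walsh x (Fin.cons false ω))^4)
        = 2 * (walsh (fun d => x d.succ) ω)^4
          + 12 * (x 0)^2 * (walsh (fun d => x d.succ) ω)^2 + 2 * (x 0)^4 := by
      intro ω
      simp only [walsh_cons, rad]
      norm_num
      ring
    rw [Finset.sum_congr rfl (fun ω _ => h ω)]
    rw [Finset.sum_add_distrib, Finset.sum_add_distrib, ← Finset.mul_sum, ← Finset.mul_sum,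
      Finset.sum_const, card_bool_fun, nsmul_eq_mul]
    have h2 := walsh_sq (fun d => x d.succ)
    have h4 := ih (fun d => x d.succ)
    have hS : (0:ℝ) ≤ ∑ d : Fin D, (x (Fin.succ d))^2 := Finset.sum_nonneg fun _ _ => sq_nonneg _
    rw [h2]
    have hpow : (2:ℝ)^(D+1) = 2 * 2^D := by rw [pow_succ]; ring
    rw [Fin.sum_univ_succ, hpow]
    push_cast
    nlinarith [h4, hS, sq_nonneg (x 0),
      mul_nonneg (pow_nonneg (by norm_num : (0:ℝ) ≤ 2) D) (sq_nonneg (x 0 * x 0))]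

/-- truncation at level 7 -/
def tr (t : ℝ) : ℝ := max (min t 7) (-7)

lemma abs_tr_le (t : ℝ) : |tr t| ≤ 7 := by
  rw [abs_le]; constructor
  · exact le_max_right _ _
  · apply max_le
    · exact le_trans (min_le_right _ _) (by norm_num)
    · norm_num

lemma tr_sq_le (t : ℝ) : (tr t)^2 ≤ t^2 := by
  rcases le_total t 0 with h | h
  · have : tr t = max t (-7) := by
      rw [tr, min_eq_left (by linarith)]
    rw [this]
    rcases le_total t (-7) with h2 | h2
    · rw [max_eq_right h2]; nlinarith
    · rw [max_eq_left h2]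
  · have : tr t = min t 7 := by
      rw [tr, max_eq_left]
      exact le_trans (by norm_num) (le_min h (by norm_num))
    rw [this]
    rcases le_total t 7 with h2 | h2
    · rw [min_eq_left h2]
    · rw [min_eq_right h2]; nlinarith

lemma sub_tr_sq_le (t : ℝ) : (t - tr t)^2 * 49 ≤ t^4 := by
  rcases le_total t 0 with h | h
  · have h1 : tr t = max t (-7) := by rw [tr, min_eq_left (by linarith)]
    rcases le_total t (-7) with h2 | h2
    · rw [h1, max_eq_right h2]; nlinarith
    · rw [h1, max_eq_left h2]; simp; positivity
  · have h1 : tr t = min t 7 := by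
      rw [tr, max_eq_left]; exact le_trans (by norm_num) (le_min h (by norm_num))
    rcases le_total t 7 with h2 | h2
    · rw [h1, min_eq_left h2]; simp; positivity
    · rw [h1, min_eq_right h2]; nlinarith


section core
variable {J K : Type} [Fintype J] [Fintype K]

def gtSet (A : J → K → ℝ) : Set ℝ :=
  {r | ∃ (D : ℕ) (x : J → Fin D → ℝ) (y : K → Fin D → ℝ),
    (∀ j, ∑ d, (x j d)^2 ≤ 1) ∧ (∀ k, ∑ d, (y k d)^2 ≤ 1) ∧
    r = ∑ j, ∑ k, A j k * ∑ d, x j d * y k d}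

lemma gtSet_zero_mem (A : J → K → ℝ) : (0:ℝ) ∈ gtSet A := by
  refine ⟨0, (fun _ _ => 0), (fun _ _ => 0), by simp, by simp, by simp⟩

lemma ip_abs_le {D : ℕ} (a b : Fin D → ℝ) (ha : ∑ d, (a d)^2 ≤ 1) (hb : ∑ d, (b d)^2 ≤ 1) :
    |∑ d, a d * b d| ≤ 1 := by
  have h := Finset.sum_mul_sq_le_sq_mul_sq Finset.univ a b
  have h1 : (0:ℝ) ≤ ∑ d, (a d)^2 := Finset.sum_nonneg fun _ _ => sq_nonneg _
  have h2 : (0:ℝ) ≤ ∑ d, (b d)^2 := Finset.sum_nonneg fun _ _ => sq_nonneg _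
  rw [abs_le]
  constructor <;> nlinarith

lemma gtSet_bddAbove (A : J → K → ℝ) : BddAbove (gtSet A) := by
  refine ⟨∑ j, ∑ k, |A j k|, ?_⟩
  rintro r ⟨D, x, y, hx, hy, rfl⟩
  apply Finset.sum_le_sum; intro j _
  apply Finset.sum_le_sum; intro k _
  calc A j k * ∑ d, x j d * y k d ≤ |A j k * ∑ d, x j d * y k d| := le_abs_self _
    _ = |A j k| * |∑ d, x j d * y k d| := abs_mul _ _
    _ ≤ |A j k| * 1 := by
        exact mul_le_mul_of_nonneg_left (ip_abs_le _ _ (hx j) (hy k)) (abs_nonneg _)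
    _ = |A j k| := mul_one _

lemma gtSet_sSup_nonneg (A : J → K → ℝ) : 0 ≤ sSup (gtSet A) :=
  le_csSup (gtSet_bddAbove A) (gtSet_zero_mem A)

lemma triple_swap {α β γ : Type*} [Fintype α] [Fintype β] [Fintype γ] (f : α → β → γ → ℝ) :
    ∑ a, ∑ b, ∑ c, f a b c = ∑ c, ∑ a, ∑ b, f a b c :=
  calc ∑ a, ∑ b, ∑ c, f a b c
      = ∑ a, ∑ c, ∑ b, f a b c := Finset.sum_congr rfl fun a _ => Finset.sum_comm
    _ = ∑ c, ∑ a, ∑ b, f a b c := Finset.sum_comm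

lemma gtSet_selfbound (A : J → K → ℝ) (β : ℝ)
    (hA : ∀ (u : J → ℝ) (v : K → ℝ), (∀ j, |u j| ≤ 1) → (∀ k, |v k| ≤ 1) →
      |∑ j, ∑ k, A j k * (u j * v k)| ≤ β)
    {r : ℝ} (hr : r ∈ gtSet A) : r ≤ 49*β + (1/2) * sSup (gtSet A) := by
  classical
  obtain ⟨D, x, y, hx, hy, rfl⟩ := hr
  set F := sSup (gtSet A) with hF
  have hcpos : (0:ℝ) < 2^D := by positivity
  set φ : J → (Fin D → Bool) → ℝ := fun j ω => walsh (x j) ω with hφ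
  set ψ : K → (Fin D → Bool) → ℝ := fun k ω => walsh (y k) ω with hψ
  -- generic membership producer
  have hmem : ∀ (a : J → (Fin D → Bool) → ℝ) (b : K → (Fin D → Bool) → ℝ),
      (∀ j, ∑ ω, (a j ω)^2 ≤ 2^D) → (∀ k, ∑ ω, (b k ω)^2 ≤ 2^D) →
      (∑ j, ∑ k, A j k * (((2:ℝ)^D)⁻¹ * ∑ ω, a j ω * b k ω)) ∈ gtSet A := by
    intro a b ha hb
    set s : ℝ := (Real.sqrt (2^D))⁻¹ with hs
    have hs2 : s^2 = ((2:ℝ)^D)⁻¹ := by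
      rw [hs, inv_pow, Real.sq_sqrt hcpos.le]
    have hcard : Fintype.card (Fin D → Bool) = 2^D :=
      (Finset.card_univ).symm.trans card_bool_fun
    set e : (Fin D → Bool) ≃ Fin (2^D) := Fintype.equivFinOfCardEq hcard with he
    refine ⟨2^D, fun j d => s * a j (e.symm d), fun k d => s * b k (e.symm d), ?_, ?_, ?_⟩
    · intro j
      rw [Equiv.sum_comp e.symm (fun ω => (s * a j ω)^2)]
      have : ∑ ω, (s * a j ω)^2 = s^2 * ∑ ω, (a j ω)^2 := by
        rw [Finset.mul_sum]
        exact Finset.sum_congr rfl fun ω _ => by ring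
      rw [this, hs2]
      calc ((2:ℝ)^D)⁻¹ * ∑ ω, (a j ω)^2 ≤ ((2:ℝ)^D)⁻¹ * 2^D :=
            mul_le_mul_of_nonneg_left (ha j) (by positivity)
        _ = 1 := inv_mul_cancel₀ (ne_of_gt hcpos)
    · intro k
      rw [Equiv.sum_comp e.symm (fun ω => (s * b k ω)^2)]
      have : ∑ ω, (s * b k ω)^2 = s^2 * ∑ ω, (b k ω)^2 := by
        rw [Finset.mul_sum]
        exact Finset.sum_congr rfl fun ω _ => by ring
      rw [this, hs2]
      calc ((2:ℝ)^D)⁻¹ * ∑ ω, (b k ω)^2 ≤ ((2:ℝ)^D)⁻¹ * 2^D :=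
            mul_le_mul_of_nonneg_left (hb k) (by positivity)
        _ = 1 := inv_mul_cancel₀ (ne_of_gt hcpos)
    · apply Finset.sum_congr rfl; intro j _
      apply Finset.sum_congr rfl; intro k _
      congr 1
      rw [Equiv.sum_comp e.symm (fun ω => (s * a j ω) * (s * b k ω))]
      have : ∑ ω, (s * a j ω) * (s * b k ω) = s^2 * ∑ ω, a j ω * b k ω := by
        rw [Finset.mul_sum]
        exact Finset.sum_congr rfl fun ω _ => by ring
      rw [this, hs2]
  -- inner product identity
  have hip : ∀ j k, ∑ d, x j d * y k d = ((2:ℝ)^D)⁻¹ * ∑ ω, φ j ω * ψ k ω := by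
    intro j k
    rw [hφ, hψ]
    simp only []
    rw [walsh_orth, ← mul_assoc, inv_mul_cancel₀ (ne_of_gt hcpos), one_mul]
  -- split into three terms
  have hsplit : ∑ j, ∑ k, A j k * ∑ d, x j d * y k d
      = (∑ j, ∑ k, A j k * (((2:ℝ)^D)⁻¹ * ∑ ω, tr (φ j ω) * tr (ψ k ω)))
      + ((∑ j, ∑ k, A j k * (((2:ℝ)^D)⁻¹ * ∑ ω, tr (φ j ω) * (ψ k ω - tr (ψ k ω))))
      + (∑ j, ∑ k, A j k * (((2:ℝ)^D)⁻¹ * ∑ ω, (φ j ω - tr (φ j ω)) * ψ k ω))) := by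
    rw [← Finset.sum_add_distrib, ← Finset.sum_add_distrib]
    apply Finset.sum_congr rfl; intro j _
    rw [← Finset.sum_add_distrib, ← Finset.sum_add_distrib]
    apply Finset.sum_congr rfl; intro k _
    rw [hip j k]
    rw [← mul_add, ← mul_add, ← mul_add, ← mul_add, ← Finset.sum_add_distrib,
      ← Finset.sum_add_distrib]
    congr 2
    apply Finset.sum_congr rfl; intro ω _
    ring
  rw [hsplit]
  -- first term
  have hT1 : ∑ j, ∑ k, A j k * (((2:ℝ)^D)⁻¹ * ∑ ω, tr (φ j ω) * tr (ψ k ω)) ≤ 49 * β := by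
    have hswap : ∑ j, ∑ k, A j k * (((2:ℝ)^D)⁻¹ * ∑ ω, tr (φ j ω) * tr (ψ k ω))
        = ((2:ℝ)^D)⁻¹ * ∑ ω, ∑ j, ∑ k, A j k * (tr (φ j ω) * tr (ψ k ω)) := by
      simp only [Finset.mul_sum]
      rw [triple_swap (fun j k ω => A j k * (((2:ℝ)^D)⁻¹ * (tr (φ j ω) * tr (ψ k ω))))]
      apply Finset.sum_congr rfl; intro ω _
      apply Finset.sum_congr rfl; intro j _
      apply Finset.sum_congr rfl; intro k _
      ring
    rw [hswap]
    have hωbound : ∀ ω : Fin D → Bool,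
        ∑ j, ∑ k, A j k * (tr (φ j ω) * tr (ψ k ω)) ≤ 49 * β := by
      intro ω
      have h7 : ∀ t : ℝ, |tr t / 7| ≤ 1 := by
        intro t
        rw [abs_div, div_le_one (by norm_num : (0:ℝ) < |(7:ℝ)|)]
        calc |tr t| ≤ 7 := abs_tr_le t
          _ = |(7:ℝ)| := by norm_num
      have hrw : ∑ j, ∑ k, A j k * (tr (φ j ω) * tr (ψ k ω))
          = 49 * ∑ j, ∑ k, A j k * ((tr (φ j ω) / 7) * (tr (ψ k ω) / 7)) := by
        rw [Finset.mul_sum]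
        apply Finset.sum_congr rfl; intro j _
        rw [Finset.mul_sum]
        apply Finset.sum_congr rfl; intro k _
        ring
      rw [hrw]
      have := hA (fun j => tr (φ j ω) / 7) (fun k => tr (ψ k ω) / 7)
        (fun j => h7 _) (fun k => h7 _)
      have h2 := (abs_le.1 this).2
      linarith
    calc ((2:ℝ)^D)⁻¹ * ∑ ω, ∑ j, ∑ k, A j k * (tr (φ j ω) * tr (ψ k ω))
        ≤ ((2:ℝ)^D)⁻¹ * ∑ ω : Fin D → Bool, 49 * β := by
          apply mul_le_mul_of_nonneg_left _ (by positivity)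
          exact Finset.sum_le_sum fun ω _ => hωbound ω
      _ = ((2:ℝ)^D)⁻¹ * (2^D * (49 * β)) := by
          rw [Finset.sum_const, card_bool_fun, nsmul_eq_mul]
          push_cast; ring
      _ = 49 * β := by
          rw [← mul_assoc, inv_mul_cancel₀ (ne_of_gt hcpos), one_mul]
  -- second term
  have hφsq : ∀ j, ∑ ω, (tr (φ j ω))^2 ≤ 2^D := by
    intro j
    calc ∑ ω, (tr (φ j ω))^2 ≤ ∑ ω, (φ j ω)^2 := Finset.sum_le_sum fun ω _ => tr_sq_le _
      _ = 2^D * ∑ d, (x j d)^2 := walsh_sq (x j)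
      _ ≤ 2^D * 1 := mul_le_mul_of_nonneg_left (hx j) hcpos.le
      _ = 2^D := mul_one _
  have hψsq : ∀ k, ∑ ω, (ψ k ω)^2 ≤ 2^D := by
    intro k
    calc ∑ ω, (ψ k ω)^2 = 2^D * ∑ d, (y k d)^2 := walsh_sq (y k)
      _ ≤ 2^D * 1 := mul_le_mul_of_nonneg_left (hy k) hcpos.le
      _ = 2^D := mul_one _
  have hrem : ∀ (v : Fin D → ℝ), ∑ d, (v d)^2 ≤ 1 →
      ∑ ω, (4 * (walsh v ω - tr (walsh v ω)))^2 ≤ 2^D := by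
    intro v hv
    have h49 : ∑ ω, (walsh v ω - tr (walsh v ω))^2 * 49 ≤ ∑ ω, (walsh v ω)^4 :=
      Finset.sum_le_sum fun ω _ => sub_tr_sq_le _
    have h4 := walsh_pow4 v
    have hvnn : (0:ℝ) ≤ ∑ d, (v d)^2 := Finset.sum_nonneg fun _ _ => sq_nonneg _
    have hvsq : (∑ d, (v d)^2)^2 ≤ 1 := by nlinarith
    have hsum : ∑ ω, (4 * (walsh v ω - tr (walsh v ω)))^2
        = 16 * ∑ ω, (walsh v ω - tr (walsh v ω))^2 := by
      rw [Finset.mul_sum]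
      exact Finset.sum_congr rfl fun ω _ => by ring
    rw [hsum]
    have hsum49 : ∑ ω, (walsh v ω - tr (walsh v ω))^2 * 49
        = 49 * ∑ ω, (walsh v ω - tr (walsh v ω))^2 := by
      rw [Finset.mul_sum]
      exact Finset.sum_congr rfl fun ω _ => by ring
    rw [hsum49] at h49
    nlinarith [pow_pos (by norm_num : (0:ℝ) < 2) D]
  have hT2 : ∑ j, ∑ k, A j k * (((2:ℝ)^D)⁻¹ * ∑ ω, tr (φ j ω) * (ψ k ω - tr (ψ k ω)))
      ≤ (1/4) * F := by
    have hv2 := hmem (fun j ω => tr (φ j ω)) (fun k ω => 4 * (ψ k ω - tr (ψ k ω)))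
      hφsq (fun k => hrem (y k) (hy k))
    have hle := le_csSup (gtSet_bddAbove A) hv2
    have hrw : ∑ j, ∑ k, A j k * (((2:ℝ)^D)⁻¹ * ∑ ω, tr (φ j ω) * (4 * (ψ k ω - tr (ψ k ω))))
        = 4 * ∑ j, ∑ k, A j k * (((2:ℝ)^D)⁻¹ * ∑ ω, tr (φ j ω) * (ψ k ω - tr (ψ k ω))) := by
      simp only [Finset.mul_sum]
      apply Finset.sum_congr rfl; intro j _
      apply Finset.sum_congr rfl; intro k _
      apply Finset.sum_congr rfl; intro ω _
      ring
    rw [hrw] at hle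
    linarith
  have hT3 : ∑ j, ∑ k, A j k * (((2:ℝ)^D)⁻¹ * ∑ ω, (φ j ω - tr (φ j ω)) * ψ k ω)
      ≤ (1/4) * F := by
    have hv3 := hmem (fun j ω => 4 * (φ j ω - tr (φ j ω))) (fun k ω => ψ k ω)
      (fun j => hrem (x j) (hx j)) hψsq
    have hle := le_csSup (gtSet_bddAbove A) hv3
    have hrw : ∑ j, ∑ k, A j k * (((2:ℝ)^D)⁻¹ * ∑ ω, (4 * (φ j ω - tr (φ j ω))) * ψ k ω)
        = 4 * ∑ j, ∑ k, A j k * (((2:ℝ)^D)⁻¹ * ∑ ω, (φ j ω - tr (φ j ω)) * ψ k ω) := by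
      simp only [Finset.mul_sum]
      apply Finset.sum_congr rfl; intro j _
      apply Finset.sum_congr rfl; intro k _
      apply Finset.sum_congr rfl; intro ω _
      ring
    rw [hrw] at hle
    linarith
  linarith

lemma gtSet_sSup_le (A : J → K → ℝ) (β : ℝ)
    (hA : ∀ (u : J → ℝ) (v : K → ℝ), (∀ j, |u j| ≤ 1) → (∀ k, |v k| ≤ 1) →
      |∑ j, ∑ k, A j k * (u j * v k)| ≤ β) : sSup (gtSet A) ≤ 98 * β := by
  have h := csSup_le ⟨0, gtSet_zero_mem A⟩
    (fun r hr => gtSet_selfbound A β hA hr)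
  linarith

theorem gt_core (A : J → K → ℝ) (β : ℝ)
    (hA : ∀ (u : J → ℝ) (v : K → ℝ), (∀ j, |u j| ≤ 1) → (∀ k, |v k| ≤ 1) →
      |∑ j, ∑ k, A j k * (u j * v k)| ≤ β)
    {ι : Type*} [Fintype ι] (xv : J → ι → ℝ) (yv : K → ι → ℝ)
    (hx : ∀ j, ∑ d, (xv j d)^2 ≤ 1) (hy : ∀ k, ∑ d, (yv k d)^2 ≤ 1) :
    ∑ j, ∑ k, A j k * ∑ d, xv j d * yv k d ≤ 98 * β := by
  classical
  set e := Fintype.equivFin ι with he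
  have hmem : (∑ j, ∑ k, A j k * ∑ d, xv j d * yv k d) ∈ gtSet A := by
    refine ⟨Fintype.card ι, fun j d => xv j (e.symm d), fun k d => yv k (e.symm d), ?_, ?_, ?_⟩
    · intro j
      rw [Equiv.sum_comp e.symm (fun i => (xv j i)^2)]
      exact hx j
    · intro k
      rw [Equiv.sum_comp e.symm (fun i => (yv k i)^2)]
      exact hy k
    · apply Finset.sum_congr rfl; intro j _
      apply Finset.sum_congr rfl; intro k _
      congr 1
      rw [Equiv.sum_comp e.symm (fun i => xv j i * yv k i)]
  exact le_trans (le_csSup (gtSet_bddAbove A) hmem) (gtSet_sSup_le A β hA)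

end core
end GTaux


noncomputable section GTmain
open RCLike Finset

variable {𝕜 : Type*} [RCLike 𝕜]

local notation "⟪" x ", " y "⟫" => @inner 𝕜 _ _ x y

lemma imI_mul_imI : im (I : 𝕜) * im (I : 𝕜) = im (I : 𝕜) := I_im' (I : 𝕜)

lemma imI_sq_le_one : (im (I : 𝕜))^2 ≤ 1 := by
  have h := imI_mul_imI (𝕜 := 𝕜)
  nlinarith [sq_nonneg (im (I : 𝕜)), sq_nonneg (im (I : 𝕜) - 1)]

lemma norm_I_le_one : ‖(I : 𝕜)‖ ≤ 1 := by
  have h1 : ‖(I : 𝕜)‖^2 = re (I:𝕜) * re (I:𝕜) + im (I:𝕜) * im (I:𝕜) := norm_sq_eq_def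
  rw [I_re, imI_mul_imI] at h1
  have h2 := imI_sq_le_one (𝕜 := 𝕜)
  have h3 : im (I:𝕜) ≤ 1 := by nlinarith [sq_nonneg (im (I:𝕜) - 1)]
  have h4 : ‖(I:𝕜)‖^2 ≤ 1 := by rw [h1]; linarith
  exact (pow_le_one_iff_of_nonneg (norm_nonneg _) two_ne_zero).mp h4

/-- Gram matrix realization of finitely many vectors in a `𝕜`-inner product space
as real euclidean coordinate vectors. -/
lemma gram_realize {E : Type*} [NormedAddCommGroup E] [InnerProductSpace 𝕜 E]
    {ι : Type} [Fintype ι] [DecidableEq ι] (v : ι → E) :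
    ∃ w : ι → ι → ℝ, ∀ a b, ∑ d, w a d * w b d = re (⟪v a, v b⟫) := by
  classical
  set G : Matrix ι ι ℝ := Matrix.of (fun a b => re (⟪v a, v b⟫)) with hG
  have hsym : G.IsHermitian := by
    ext a b
    simp only [Matrix.conjTranspose_apply, hG, Matrix.of_apply, star_trivial]
    rw [← inner_conj_symm]
    exact conj_re _
  have hpsd : G.PosSemidef := by
    refine Matrix.posSemidef_iff_dotProduct_mulVec.mpr ⟨hsym, fun c => ?_⟩
    have key : dotProduct (star c) (G.mulVec c)
        = re (⟪∑ a, ((c a : ℝ) : 𝕜) • v a, ∑ b, ((c b : ℝ) : 𝕜) • v b⟫) := by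
      simp only [dotProduct, Matrix.mulVec, Pi.star_apply, star_trivial]
      rw [sum_inner, map_sum]
      apply Finset.sum_congr rfl; intro a _
      rw [inner_smul_left, conj_ofReal, re_ofReal_mul, inner_sum]
      congr 1
      rw [map_sum]
      apply Finset.sum_congr rfl; intro b _
      rw [inner_smul_right, re_ofReal_mul]
      simp only [hG, Matrix.of_apply]
      ring
    rw [key]
    exact inner_self_nonneg
  open scoped MatrixOrder in
  obtain ⟨B, hB⟩ := CStarAlgebra.nonneg_iff_eq_star_mul_self.mp hpsd.nonneg
  refine ⟨fun a d => B d a, fun a b => ?_⟩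
  have hentry : G a b = ∑ d, B d a * B d b := by
    rw [hB]
    rw [Matrix.mul_apply]
    apply Finset.sum_congr rfl; intro d _
    simp [Matrix.conjTranspose_apply]
  rw [← hentry]
  rfl

lemma polyNorm_nonneg {X Y : Type*} [NormedAddCommGroup X] [NormedAddCommGroup Y]
    (q : X → Y) : 0 ≤ polyNorm q :=
  Real.iSup_nonneg fun _ => norm_nonneg _

lemma homog_norm_le {X : Type*} [NormedAddCommGroup X] [NormedSpace 𝕜 X] {m : ℕ} (hm : 1 ≤ m)
    (q : X → 𝕜) (hq : IsHomogPoly 𝕜 m q) (ξ : X) : ‖q ξ‖ ≤ polyNorm q * ‖ξ‖ ^ m := by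
  obtain ⟨Tq, hTq⟩ := hq
  have hbdd : BddAbove (Set.range fun x : {x : X // ‖x‖ ≤ 1} => ‖q x.1‖) := by
    refine ⟨‖Tq‖, ?_⟩
    rintro r ⟨xx, rfl⟩
    show ‖q xx.1‖ ≤ ‖Tq‖
    rw [hTq]
    calc ‖Tq (fun _ => xx.1)‖ ≤ ‖Tq‖ * ∏ _l : Fin m, ‖xx.1‖ := Tq.le_opNorm _
      _ ≤ ‖Tq‖ * 1 := mul_le_mul_of_nonneg_left
          (Finset.prod_le_one (fun _ _ => norm_nonneg _) (fun _ _ => xx.2)) (norm_nonneg _)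
      _ = ‖Tq‖ := mul_one _
  rcases eq_or_ne ξ 0 with rfl | hξ
  · have h0 : q 0 = 0 := by
      rw [hTq]
      exact Tq.map_coord_zero (⟨0, hm⟩ : Fin m) rfl
    rw [h0, norm_zero, norm_zero, zero_pow (by omega : m ≠ 0), mul_zero]
  · have hn : (0:ℝ) < ‖ξ‖ := norm_pos_iff.mpr hξ
    set u : X := ((‖ξ‖ : ℝ) : 𝕜)⁻¹ • ξ with hu
    have hun : ‖u‖ ≤ 1 := by
      rw [hu, norm_smul, norm_inv, norm_ofReal, abs_of_pos hn, inv_mul_cancel₀ (ne_of_gt hn)]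
    have hxu : ξ = ((‖ξ‖ : ℝ) : 𝕜) • u := by
      rw [hu, smul_smul, mul_inv_cancel₀, one_smul]
      exact ofReal_ne_zero.mpr (ne_of_gt hn)
    have hqx : ‖q ξ‖ = ‖ξ‖ ^ m * ‖q u‖ := by
      conv_lhs => rw [hxu]
      rw [hTq]
      rw [show Tq (fun _ : Fin m => ((‖ξ‖ : ℝ) : 𝕜) • u)
            = (∏ _l : Fin m, ((‖ξ‖ : ℝ) : 𝕜)) • Tq (fun _ => u) from
          Tq.map_smul_univ (fun _ => ((‖ξ‖ : ℝ) : 𝕜)) (fun _ => u)]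
      rw [Finset.prod_const, norm_smul, norm_pow, norm_ofReal, abs_of_pos hn, Finset.card_univ,
        Fintype.card_fin, ← hTq]
    rw [hqx]
    have hqu : ‖q u‖ ≤ polyNorm q := by
      have h := le_ciSup hbdd (⟨u, hun⟩ : {x : X // ‖x‖ ≤ 1})
      exact h
    calc ‖ξ‖^m * ‖q u‖ ≤ ‖ξ‖^m * polyNorm q := mul_le_mul_of_nonneg_left hqu (by positivity)
      _ = polyNorm q * ‖ξ‖^m := mul_comm _ _

def coordCLM (a : ℕ) : lp (fun _ : ℕ => 𝕜) 1 →L[𝕜] 𝕜 :=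
  LinearMap.mkContinuous
    { toFun := fun f => f a
      map_add' := fun f g => rfl
      map_smul' := fun c f => rfl }
    1 (fun f => by
      rw [one_mul]
      exact lp.norm_apply_le_norm one_ne_zero f a)

lemma coordCLM_apply (a : ℕ) (f : lp (fun _ : ℕ => 𝕜) 1) : coordCLM (𝕜 := 𝕜) a f = f a := rfl

lemma lp_one_sum_norm_le (f : lp (fun _ : ℕ => 𝕜) 1) (s : Finset ℕ) :
    ∑ a ∈ s, ‖f a‖ ≤ ‖f‖ := by
  have hp : (0:ℝ) < ENNReal.toReal 1 := by simp
  have h := lp.hasSum_norm hp f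
  simp only [ENNReal.toReal_one, Real.rpow_one] at h
  exact sum_le_hasSum s (fun a _ => norm_nonneg _) h

end GTmain

open RCLike in
set_option maxHeartbeats 4000000 in
/-- Grothendieck type theorem: every continuous `m`-homogeneous
polynomial `P : ℓ₁ → ℓ₂` is factorable strongly `1`-summing. -/
theorem grothendieck_factStronglySummingPoly
    {𝕜 : Type*} [RCLike 𝕜] (m : ℕ) (hm : 1 ≤ m)
    (P : lp (fun _ : ℕ => 𝕜) 1 → lp (fun _ : ℕ => 𝕜) 2) (hP : IsHomogPoly 𝕜 m P) :
    FactStronglySummingPoly 𝕜 m 1 P := by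
  classical
  obtain ⟨T, hTP⟩ := hP
  refine ⟨⟨T, hTP⟩, 98 * Real.sqrt 2 * ‖T‖, ⟨by positivity, ?_⟩⟩
  intro m₁ m₂ x lam
  rw [show (1:ℝ)/1 = 1 by norm_num]
  simp only [Real.rpow_one]
  -- boundedness of the polynomial sup family
  have hfam_bdd : BddAbove (Set.range
      fun q : {q : lp (fun _ : ℕ => 𝕜) 1 → 𝕜 // IsHomogPoly 𝕜 m q ∧ polyNorm q ≤ 1} =>
      ∑ j, ‖∑ i, lam j i • q.1 (x j i)‖) := by
    refine ⟨∑ j, ∑ i, ‖lam j i‖ * ‖x j i‖ ^ m, ?_⟩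
    rintro r ⟨q, rfl⟩
    show ∑ j, ‖∑ i, lam j i • q.1 (x j i)‖ ≤ _
    apply Finset.sum_le_sum; intro j _
    calc ‖∑ i, lam j i • q.1 (x j i)‖ ≤ ∑ i, ‖lam j i • q.1 (x j i)‖ := norm_sum_le _ _
      _ = ∑ i, ‖lam j i‖ * ‖q.1 (x j i)‖ := by
          apply Finset.sum_congr rfl; intro i _; rw [norm_smul]
      _ ≤ ∑ i, ‖lam j i‖ * ‖x j i‖^m := by
          apply Finset.sum_le_sum; intro i _
          apply mul_le_mul_of_nonneg_left _ (norm_nonneg _)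
          calc ‖q.1 (x j i)‖ ≤ polyNorm q.1 * ‖x j i‖^m :=
                homog_norm_le hm q.1 q.2.1 _
            _ ≤ 1 * ‖x j i‖^m := mul_le_mul_of_nonneg_right q.2.2 (by positivity)
            _ = ‖x j i‖^m := one_mul _
  set S : ℝ := ⨆ q : {q : lp (fun _ : ℕ => 𝕜) 1 → 𝕜 // IsHomogPoly 𝕜 m q ∧ polyNorm q ≤ 1},
      ∑ j, ‖∑ i, lam j i • q.1 (x j i)‖ with hSdef
  have hS0 : 0 ≤ S := Real.iSup_nonneg fun q => Finset.sum_nonneg fun _ _ => norm_nonneg _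
  have hSle : ∀ (q : lp (fun _ : ℕ => 𝕜) 1 → 𝕜), IsHomogPoly 𝕜 m q → polyNorm q ≤ 1 →
      ∑ j, ‖∑ i, lam j i • q (x j i)‖ ≤ S := by
    intro q h1 h2
    exact le_ciSup hfam_bdd (⟨q, h1, h2⟩ : {q : lp (fun _ : ℕ => 𝕜) 1 → 𝕜 //
      IsHomogPoly 𝕜 m q ∧ polyNorm q ≤ 1})
  rcases eq_or_lt_of_le (norm_nonneg T) with hT0 | hTpos
  · -- T = 0
    have hT : T = 0 := by
      rw [← norm_eq_zero]; exact hT0.symm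
    have hP0 : ∀ z, P z = 0 := by
      intro z; rw [hTP, hT]; rfl
    have : ∀ j, ‖∑ i, lam j i • P (x j i)‖ = 0 := by
      intro j
      simp [hP0]
    rw [Finset.sum_congr rfl (fun j _ => this j), Finset.sum_const, smul_zero]
    positivity
  · -- main case
    haveI : Fact ((1:ENNReal) ≤ 1) := ⟨le_refl _⟩
    have hkey : ∀ KK : ℕ,
        ∑ j, ‖∑ i, lam j i • T (fun _ => ∑ a ∈ Finset.range KK, lp.single 1 a (x j i a))‖
          ≤ 98 * Real.sqrt 2 * ‖T‖ * S := by
      intro KK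
      set κ : Finset (Fin m → ℕ) := Fintype.piFinset (fun _ : Fin m => Finset.range KK) with hκ
      set cv : (Fin m → ℕ) → lp (fun _ : ℕ => 𝕜) 2 :=
        fun k => T (fun l => lp.single 1 (k l) 1) with hcv
      have hcvn : ∀ k, ‖cv k‖ ≤ ‖T‖ := by
        intro k
        have h := ContinuousMultilinearMap.le_opNorm T (fun l => lp.single 1 (k l) 1)
        have h2 : ∏ l : Fin m, ‖(lp.single 1 (k l) 1 : lp (fun _ : ℕ => 𝕜) 1)‖ = 1 := by
          rw [Finset.prod_congr rfl (fun l _ => ?_), Finset.prod_const_one]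
          have h1 := lp.norm_single (E := fun _ : ℕ => 𝕜) (p := 1) (by simp : (0:ENNReal) < 1)
            (k l) (1:𝕜)
          rw [h1, norm_one]
        rw [h2, mul_one] at h
        exact h
      set z : Fin m₁ → (Fin m → ℕ) → 𝕜 :=
        fun j k => ∑ i, lam j i * ∏ l, (x j i : ∀ _ : ℕ, 𝕜) (k l) with hz
      have hexp : ∀ j i, T (fun _ : Fin m => ∑ a ∈ Finset.range KK, lp.single 1 a (x j i a))
          = ∑ k ∈ κ, (∏ l, (x j i : ∀ _ : ℕ, 𝕜) (k l)) • cv k := by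
        intro j i
        have hms := ContinuousMultilinearMap.map_sum_finset (f := T)
          (g := fun (_ : Fin m) (a : ℕ) => lp.single 1 a ((x j i : ∀ _ : ℕ, 𝕜) a))
          (A := fun _ : Fin m => Finset.range KK)
        rw [hms, ← hκ]
        apply Finset.sum_congr rfl; intro k _
        have hsingle : ∀ l : Fin m, lp.single 1 (k l) ((x j i : ∀ _ : ℕ, 𝕜) (k l))
            = (x j i : ∀ _ : ℕ, 𝕜) (k l) • (lp.single 1 (k l) 1 : lp (fun _ : ℕ => 𝕜) 1) := by
          intro l
          rw [← lp.single_smul, smul_eq_mul, mul_one]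
        calc T (fun l => lp.single 1 (k l) ((x j i : ∀ _ : ℕ, 𝕜) (k l)))
            = T (fun l => (x j i : ∀ _ : ℕ, 𝕜) (k l) • lp.single 1 (k l) (1:𝕜)) :=
              congrArg T (funext hsingle)
          _ = (∏ l, (x j i : ∀ _ : ℕ, 𝕜) (k l)) • T (fun l => lp.single 1 (k l) (1:𝕜)) :=
              T.map_smul_univ _ _
      set yK : Fin m₁ → lp (fun _ : ℕ => 𝕜) 2 := fun j =>
        ∑ i, lam j i • T (fun _ : Fin m => ∑ a ∈ Finset.range KK, lp.single 1 a (x j i a))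
        with hyK
      have hyKz : ∀ j, yK j = ∑ k ∈ κ, z j k • cv k := by
        intro j
        simp only [hyK]
        calc (∑ i, lam j i • T (fun _ : Fin m => ∑ a ∈ Finset.range KK, lp.single 1 a (x j i a)))
            = ∑ i, ∑ k ∈ κ, (lam j i * ∏ l, (x j i : ∀ _ : ℕ, 𝕜) (k l)) • cv k := by
              apply Finset.sum_congr rfl; intro i _
              rw [hexp j i, Finset.smul_sum]
              apply Finset.sum_congr rfl; intro k _
              rw [smul_smul]
          _ = ∑ k ∈ κ, (∑ i, lam j i * ∏ l, (x j i : ∀ _ : ℕ, 𝕜) (k l)) • cv k := by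
              rw [Finset.sum_comm]
              apply Finset.sum_congr rfl; intro k _
              rw [Finset.sum_smul]
          _ = ∑ k ∈ κ, z j k • cv k := rfl
      set hvec : Fin m₁ → lp (fun _ : ℕ => 𝕜) 2 :=
        fun j => ((‖yK j‖ : ℝ) : 𝕜)⁻¹ • yK j with hhvec
      have hhn : ∀ j, ‖hvec j‖ ≤ 1 := by
        intro j
        rcases eq_or_ne (yK j) 0 with h0 | h0
        · simp only [hhvec, h0, smul_zero, norm_zero]
          norm_num
        · have hn : (0:ℝ) < ‖yK j‖ := norm_pos_iff.mpr h0
          simp only [hhvec]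
          rw [norm_smul, norm_inv, norm_ofReal, abs_of_pos hn,
            inv_mul_cancel₀ (ne_of_gt hn)]
      have hrehy : ∀ j, re (inner 𝕜 (hvec j) (yK j) : 𝕜) = ‖yK j‖ := by
        intro j
        rcases eq_or_ne (yK j) 0 with h0 | h0
        · rw [h0]
          simp
        · have hn : (0:ℝ) < ‖yK j‖ := norm_pos_iff.mpr h0
          simp only [hhvec]
          rw [inner_smul_left, ← ofReal_inv, conj_ofReal, inner_self_eq_norm_sq_to_K,
            ← ofReal_pow, ← ofReal_mul, ofReal_re]
          field_simp
      set tk : 𝕜 := ((‖T‖ : ℝ) : 𝕜)⁻¹ with htk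
      set A : Fin m₁ → ({k // k ∈ κ} × Bool) → ℝ :=
        fun j c => cond c.2 (re (z j c.1.1)) (im (z j c.1.1)) with hA
      set v : (Fin m₁ ⊕ ({k // k ∈ κ} × Bool)) → lp (fun _ : ℕ => 𝕜) 2 :=
        Sum.elim hvec (fun c => cond c.2 (tk • cv c.1.1) (tk • ((I:𝕜) • cv c.1.1))) with hv
      obtain ⟨w, hw⟩ := gram_realize (𝕜 := 𝕜) v
      have htknorm : ‖tk‖ = ‖T‖⁻¹ := by
        rw [htk, norm_inv, norm_ofReal, abs_of_pos hTpos]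
      have hx1 : ∀ j, ∑ d, (w (Sum.inl j) d)^2 ≤ 1 := by
        intro j
        have heq : ∑ d, (w (Sum.inl j) d)^2 = ∑ d, w (Sum.inl j) d * w (Sum.inl j) d := by
          apply Finset.sum_congr rfl; intro d _; ring
        rw [heq, hw]
        have hvj : v (Sum.inl j) = hvec j := rfl
        rw [hvj, inner_self_eq_norm_sq]
        calc ‖hvec j‖^2 ≤ 1^2 := pow_le_pow_left₀ (norm_nonneg _) (hhn j) 2
          _ = 1 := one_pow 2
      have hy1 : ∀ c : {k // k ∈ κ} × Bool, ∑ d, (w (Sum.inr c) d)^2 ≤ 1 := by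
        intro c
        have heq : ∑ d, (w (Sum.inr c) d)^2 = ∑ d, w (Sum.inr c) d * w (Sum.inr c) d := by
          apply Finset.sum_congr rfl; intro d _; ring
        rw [heq, hw, inner_self_eq_norm_sq]
        have hvn : ‖v (Sum.inr c)‖ ≤ 1 := by
          rcases c with ⟨k, b⟩
          cases b
          · show ‖tk • ((I:𝕜) • cv k.1)‖ ≤ 1
            rw [norm_smul, norm_smul, htknorm]
            calc ‖T‖⁻¹ * (‖(I:𝕜)‖ * ‖cv k.1‖) ≤ ‖T‖⁻¹ * (1 * ‖T‖) := by
                  apply mul_le_mul_of_nonneg_left _ (by positivity)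
                  exact mul_le_mul norm_I_le_one (hcvn k.1) (norm_nonneg _) zero_le_one
              _ = 1 := by rw [one_mul]; exact inv_mul_cancel₀ (ne_of_gt hTpos)
          · show ‖tk • cv k.1‖ ≤ 1
            rw [norm_smul, htknorm]
            calc ‖T‖⁻¹ * ‖cv k.1‖ ≤ ‖T‖⁻¹ * ‖T‖ :=
                  mul_le_mul_of_nonneg_left (hcvn k.1) (by positivity)
              _ = 1 := inv_mul_cancel₀ (ne_of_gt hTpos)
        calc ‖v (Sum.inr c)‖^2 ≤ 1^2 := pow_le_pow_left₀ (norm_nonneg _) hvn 2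
          _ = 1 := one_pow 2
      -- the Grothendieck hypothesis via polynomials
      have hAbound : ∀ (u : Fin m₁ → ℝ) (vv : ({k // k ∈ κ} × Bool) → ℝ),
          (∀ j, |u j| ≤ 1) → (∀ c, |vv c| ≤ 1) →
          |∑ j, ∑ c, A j c * (u j * vv c)| ≤ Real.sqrt 2 * S := by
        intro u vv hu hvv
        set c2 : 𝕜 := ((Real.sqrt 2 : ℝ) : 𝕜)⁻¹ with hc2
        set bb : {k // k ∈ κ} → 𝕜 :=
          fun k => ((vv (k, true) : ℝ) : 𝕜) - ((vv (k, false) : ℝ) : 𝕜) * I with hbb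
        have hreb : ∀ k, re (bb k) = vv (k, true) := by
          intro k
          simp only [hbb]
          rw [map_sub, ofReal_re, re_ofReal_mul, I_re, mul_zero, sub_zero]
        have himb : ∀ k, im (bb k) = -(vv (k, false) * im (I:𝕜)) := by
          intro k
          simp only [hbb]
          rw [map_sub, ofReal_im, im_ofReal_mul, zero_sub]
        set TB : ContinuousMultilinearMap 𝕜 (fun _ : Fin m => lp (fun _ : ℕ => 𝕜) 1) 𝕜 :=
          ∑ k ∈ κ.attach, (c2 * bb k) •
            (ContinuousMultilinearMap.mkPiAlgebra 𝕜 (Fin m) 𝕜).compContinuousLinearMap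
              (fun l => coordCLM (k.1 l)) with hTB
        set qS : lp (fun _ : ℕ => 𝕜) 1 → 𝕜 := fun ξ => TB (fun _ => ξ) with hqS
        have hqSval : ∀ ξ : lp (fun _ : ℕ => 𝕜) 1,
            qS ξ = ∑ k ∈ κ.attach, (c2 * bb k) * ∏ l, (ξ : ∀ _ : ℕ, 𝕜) (k.1 l) := by
          intro ξ
          simp only [hqS, hTB, ContinuousMultilinearMap.sum_apply,
            ContinuousMultilinearMap.smul_apply,
            ContinuousMultilinearMap.compContinuousLinearMap_apply,
            ContinuousMultilinearMap.mkPiAlgebra_apply, smul_eq_mul, coordCLM_apply]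
        have hbb_norm : ∀ k, ‖bb k‖ ≤ Real.sqrt 2 := by
          intro k
          have h2 : ‖bb k‖^2 = re (bb k) * re (bb k) + im (bb k) * im (bb k) := norm_sq_eq_def
          rw [hreb, himb] at h2
          have hI2 := imI_sq_le_one (𝕜 := 𝕜)
          have hvt := abs_le.mp (hvv (k, true))
          have hvf := abs_le.mp (hvv (k, false))
          have h3 : ‖bb k‖^2 ≤ 2 := by
            rw [h2]
            nlinarith [sq_nonneg (vv (k, false)), sq_nonneg (im (I:𝕜)),
              sq_nonneg (vv (k, false) * im (I:𝕜))]
          exact (Real.le_sqrt (norm_nonneg _) (by norm_num)).mpr h3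
        have hc2bb : ∀ k, ‖c2 * bb k‖ ≤ 1 := by
          intro k
          rw [norm_mul]
          have hnc2 : ‖c2‖ = (Real.sqrt 2)⁻¹ := by
            rw [hc2, norm_inv, norm_ofReal, abs_of_pos (Real.sqrt_pos.mpr (by norm_num))]
          rw [hnc2]
          calc (Real.sqrt 2)⁻¹ * ‖bb k‖ ≤ (Real.sqrt 2)⁻¹ * Real.sqrt 2 :=
              mul_le_mul_of_nonneg_left (hbb_norm k) (by positivity)
            _ = 1 := inv_mul_cancel₀ (by positivity)
        have hqSnorm : polyNorm qS ≤ 1 := by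
          haveI hne : Nonempty {ξ : lp (fun _ : ℕ => 𝕜) 1 // ‖ξ‖ ≤ 1} :=
            ⟨⟨0, by simp⟩⟩
          apply ciSup_le
          intro ξ
          rw [hqSval]
          calc ‖∑ k ∈ κ.attach, (c2 * bb k) * ∏ l, (ξ.1 : ∀ _ : ℕ, 𝕜) (k.1 l)‖
              ≤ ∑ k ∈ κ.attach, ‖(c2 * bb k) * ∏ l, (ξ.1 : ∀ _ : ℕ, 𝕜) (k.1 l)‖ :=
                norm_sum_le _ _
            _ ≤ ∑ k ∈ κ.attach, ∏ l, ‖(ξ.1 : ∀ _ : ℕ, 𝕜) (k.1 l)‖ := by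
                apply Finset.sum_le_sum; intro k _
                rw [norm_mul, norm_prod]
                exact mul_le_of_le_one_left
                  (Finset.prod_nonneg fun _ _ => norm_nonneg _) (hc2bb k)
            _ = ∑ k ∈ κ, ∏ l, ‖(ξ.1 : ∀ _ : ℕ, 𝕜) (k l)‖ :=
                Finset.sum_attach κ (fun k => ∏ l, ‖(ξ.1 : ∀ _ : ℕ, 𝕜) (k l)‖)
            _ = ∏ _l : Fin m, ∑ a ∈ Finset.range KK, ‖(ξ.1 : ∀ _ : ℕ, 𝕜) a‖ := by
                rw [hκ]
                exact (Finset.prod_univ_sum (fun _ : Fin m => Finset.range KK)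
                  (fun _ a => ‖(ξ.1 : ∀ _ : ℕ, 𝕜) a‖)).symm
            _ = (∑ a ∈ Finset.range KK, ‖(ξ.1 : ∀ _ : ℕ, 𝕜) a‖)^m := by
                rw [Finset.prod_const, Finset.card_univ, Fintype.card_fin]
            _ ≤ ‖ξ.1‖^m := pow_le_pow_left₀
                (Finset.sum_nonneg fun _ _ => norm_nonneg _)
                (lp_one_sum_norm_le ξ.1 _) m
            _ ≤ 1 := pow_le_one₀ (norm_nonneg _) ξ.2
        have hqS_S : ∑ j, ‖∑ i, lam j i * qS (x j i)‖ ≤ S := by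
          have h := hSle qS ⟨TB, fun ξ => rfl⟩ hqSnorm
          simpa only [smul_eq_mul] using h
        have hAv : ∀ j, ∑ c : {k // k ∈ κ} × Bool, A j c * vv c
            = re (((Real.sqrt 2 : ℝ) : 𝕜) * ∑ i, lam j i * qS (x j i)) := by
          intro j
          rw [Fintype.sum_prod_type]
          have hk : ∀ k : {k // k ∈ κ},
              (∑ b : Bool, A j (k, b) * vv (k, b)) = re (z j k.1 * bb k) := by
            intro k
            rw [Fintype.sum_bool]
            show re (z j k.1) * vv (k, true) + im (z j k.1) * vv (k, false) = _
            rw [mul_re, hreb, himb]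
            linear_combination (-(vv (k, false))) * RCLike.I_im (z j k.1)
          rw [Finset.sum_congr rfl (fun k _ => hk k), ← map_sum]
          congr 1
          have hlhs : ∑ k : {k // k ∈ κ}, z j k.1 * bb k
              = ∑ k ∈ κ.attach, z j k.1 * bb k := rfl
          rw [hlhs]
          have hrhs : ((Real.sqrt 2 : ℝ) : 𝕜) * ∑ i, lam j i * qS (x j i)
              = ∑ i, ∑ k ∈ κ.attach,
                  ((Real.sqrt 2 : ℝ) : 𝕜) * (lam j i * ((c2 * bb k)
                    * ∏ l, (x j i : ∀ _ : ℕ, 𝕜) (k.1 l))) := by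
            rw [Finset.mul_sum]
            apply Finset.sum_congr rfl; intro i _
            rw [hqSval, Finset.mul_sum, Finset.mul_sum]
          rw [hrhs, Finset.sum_comm]
          apply Finset.sum_congr rfl; intro k _
          simp only [hz]
          rw [Finset.sum_mul]
          apply Finset.sum_congr rfl; intro i _
          have h1 : ((Real.sqrt 2 : ℝ) : 𝕜) * c2 = 1 := by
            rw [hc2]
            exact mul_inv_cancel₀ (ofReal_ne_zero.mpr (by positivity))
          rw [show ((Real.sqrt 2 : ℝ) : 𝕜) * (lam j i * ((c2 * bb k)
                * ∏ l, (x j i : ∀ _ : ℕ, 𝕜) (k.1 l)))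
              = (((Real.sqrt 2 : ℝ) : 𝕜) * c2) * (lam j i * (bb k
                * ∏ l, (x j i : ∀ _ : ℕ, 𝕜) (k.1 l))) from by ring, h1, one_mul]
          ring
        calc |∑ j, ∑ c, A j c * (u j * vv c)|
            = |∑ j, u j * ∑ c, A j c * vv c| := by
              congr 1
              apply Finset.sum_congr rfl; intro j _
              rw [Finset.mul_sum]
              apply Finset.sum_congr rfl; intro c _
              ring
          _ ≤ ∑ j, |u j * ∑ c, A j c * vv c| := Finset.abs_sum_le_sum_abs _ _
          _ ≤ ∑ j, |∑ c, A j c * vv c| := by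
              apply Finset.sum_le_sum; intro j _
              rw [abs_mul]
              calc |u j| * |∑ c, A j c * vv c| ≤ 1 * |∑ c, A j c * vv c| :=
                  mul_le_mul_of_nonneg_right (hu j) (abs_nonneg _)
                _ = |∑ c, A j c * vv c| := one_mul _
          _ = ∑ j, |re (((Real.sqrt 2 : ℝ) : 𝕜) * ∑ i, lam j i * qS (x j i))| := by
              apply Finset.sum_congr rfl; intro j _
              rw [hAv]
          _ ≤ ∑ j, ‖((Real.sqrt 2 : ℝ) : 𝕜) * ∑ i, lam j i * qS (x j i)‖ :=
              Finset.sum_le_sum fun j _ => abs_re_le_norm _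
          _ = ∑ j, Real.sqrt 2 * ‖∑ i, lam j i * qS (x j i)‖ := by
              apply Finset.sum_congr rfl; intro j _
              rw [norm_mul, norm_ofReal, abs_of_pos (Real.sqrt_pos.mpr (by norm_num))]
          _ = Real.sqrt 2 * ∑ j, ‖∑ i, lam j i * qS (x j i)‖ := (Finset.mul_sum _ _ _).symm
          _ ≤ Real.sqrt 2 * S := mul_le_mul_of_nonneg_left hqS_S (Real.sqrt_nonneg 2)
      have hGT := GTaux.gt_core A (Real.sqrt 2 * S) hAbound
        (fun j => w (Sum.inl j)) (fun c => w (Sum.inr c)) hx1 hy1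
      have hID1 : ∀ j, ∑ c : {k // k ∈ κ} × Bool,
          A j c * ∑ d, w (Sum.inl j) d * w (Sum.inr c) d = ‖T‖⁻¹ * ‖yK j‖ := by
        intro j
        rw [Fintype.sum_prod_type]
        have hk : ∀ k : {k // k ∈ κ}, (∑ b : Bool,
            A j (k, b) * ∑ d, w (Sum.inl j) d * w (Sum.inr (k, b)) d)
            = ‖T‖⁻¹ * re (z j k.1 * (inner 𝕜 (hvec j) (cv k.1) : 𝕜)) := by
          intro k
          rw [Fintype.sum_bool, hw, hw]
          show re (z j k.1) * re (inner 𝕜 (hvec j) (tk • cv k.1) : 𝕜)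
              + im (z j k.1) * re (inner 𝕜 (hvec j) (tk • ((I:𝕜) • cv k.1)) : 𝕜) = _
          rw [inner_smul_right, inner_smul_right, inner_smul_right, htk, ← ofReal_inv,
            re_ofReal_mul, re_ofReal_mul, mul_re (z j k.1), mul_re (I:𝕜), I_re]
          linear_combination (-(‖T‖⁻¹ * im (inner 𝕜 (hvec j) (cv k.1) : 𝕜)))
            * RCLike.I_im (z j k.1)
        rw [Finset.sum_congr rfl (fun k _ => hk k), ← Finset.mul_sum]
        congr 1
        rw [← map_sum]
        have hsum : ∑ k : {k // k ∈ κ}, z j k.1 * (inner 𝕜 (hvec j) (cv k.1) : 𝕜)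
            = inner 𝕜 (hvec j) (yK j) := by
          rw [hyKz j, inner_sum]
          rw [Finset.sum_coe_sort κ (fun k => z j k * (inner 𝕜 (hvec j) (cv k) : 𝕜))]
          apply Finset.sum_congr rfl; intro k _
          rw [inner_smul_right]
        rw [hsum, hrehy j]
      show ∑ j, ‖yK j‖ ≤ 98 * Real.sqrt 2 * ‖T‖ * S
      calc ∑ j, ‖yK j‖ = ‖T‖ * ∑ j, ‖T‖⁻¹ * ‖yK j‖ := by
            rw [Finset.mul_sum]
            apply Finset.sum_congr rfl; intro j _
            rw [← mul_assoc, mul_inv_cancel₀ (ne_of_gt hTpos), one_mul]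
        _ = ‖T‖ * ∑ j, ∑ c : {k // k ∈ κ} × Bool,
              A j c * ∑ d, w (Sum.inl j) d * w (Sum.inr c) d := by
            congr 1
            exact Finset.sum_congr rfl (fun j _ => (hID1 j).symm)
        _ ≤ ‖T‖ * (98 * (Real.sqrt 2 * S)) := mul_le_mul_of_nonneg_left hGT (norm_nonneg T)
        _ = 98 * Real.sqrt 2 * ‖T‖ * S := by ring
    have hconv : Filter.Tendsto
        (fun KK => ∑ j, ‖∑ i, lam j i •
          T (fun _ => ∑ a ∈ Finset.range KK, lp.single 1 a (x j i a))‖)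
        Filter.atTop (nhds (∑ j, ‖∑ i, lam j i • P (x j i)‖)) := by
      apply tendsto_finset_sum; intro j _
      apply Filter.Tendsto.norm
      apply tendsto_finset_sum; intro i _
      rw [hTP]
      apply Filter.Tendsto.const_smul
      have h1 : Filter.Tendsto (fun KK => ∑ a ∈ Finset.range KK, lp.single 1 a (x j i a))
          Filter.atTop (nhds (x j i)) :=
        (lp.hasSum_single ENNReal.one_ne_top (x j i)).tendsto_sum_nat
      have h2 : Continuous fun z : lp (fun _ : ℕ => 𝕜) 1 => T (fun _ : Fin m => z) :=
        T.cont.comp (continuous_pi fun _ => continuous_id)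
      exact (h2.tendsto _).comp h1
    exact le_of_tendsto hconv (Filter.Eventually.of_forall hkey)
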